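/- In the Witt algebra W(l₁,l₂,l₃;Γ) = A·D with bracket [u∂_p, v∂_q] = u∂_p(v)∂_q − v∂_q(u)∂_p extended bilinearly, the set S(l₁,l₂,l₃;0,Γ) spanned by all elements D_{p,q}(u) = ∂_p(u)∂_q − ∂_q(u)∂_p (p,q ∈ {1,…,l}, u ∈ A) is closed under the Lie bracket, i.e., it forms a Lie subalgebra of W(l₁,l₂,l₃;Γ). -/

import Mathlib

open scoped BigOperators

namespace SDF

variable (F : Type) [Field F] [IsAlgClosed F] [CharZero F]
variable (l₁ l₂ l₃ : ℕ) (Γ : AddSubgroup (Fin (l₂ + l₃) → F))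

/-- The semigroup algebra `A(l₁,l₂,l₃;Γ) = F[Γ × ℕ^{l₁+l₂}]`,
with basis `x^α t^i` for `α ∈ Γ`, `i ∈ ℕ^{l₁+l₂}`. -/
abbrev Alg : Type := AddMonoidAlgebra F (↥Γ × (Fin (l₁ + l₂) →₀ ℕ))

/-- The basis monomial `x^α t^i`. -/
noncomputable def mono (α : Γ) (i : Fin (l₁ + l₂) →₀ ℕ) : Alg F l₁ l₂ l₃ Γ :=
  AddMonoidAlgebra.single (α, i) 1

/-- The `p`-th coordinate of `α ∈ Γ ⊆ F^{l₂+l₃}`, with the convention `α_p = 0` for `p ≤ l₁`. -/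
def acoord (p : Fin (l₁ + l₂ + l₃)) (α : Γ) : F :=
  if h : l₁ ≤ (p : ℕ) then (α : Fin (l₂ + l₃) → F) ⟨(p : ℕ) - l₁, by have := p.isLt; omega⟩
  else 0

/-- The `p`-th coordinate of a general `μ ∈ F^{l₂+l₃}`, with the convention `μ_p = 0` for `p ≤ l₁`. -/
def fcoord (p : Fin (l₁ + l₂ + l₃)) (μ : Fin (l₂ + l₃) → F) : F :=
  if h : l₁ ≤ (p : ℕ) then μ ⟨(p : ℕ) - l₁, by have := p.isLt; omega⟩ else 0

/-- The `p`-th component of `i ∈ ℕ^{l₁+l₂}`, with the convention `i_p = 0` for `p > l₁+l₂`. -/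
def icoord (p : Fin (l₁ + l₂ + l₃)) (i : Fin (l₁ + l₂) →₀ ℕ) : ℕ :=
  if h : (p : ℕ) < l₁ + l₂ then i ⟨(p : ℕ), h⟩ else 0

/-- `i - 1_[p]` (truncated subtraction; only used with coefficient `i_p`). -/
noncomputable def lower (p : Fin (l₁ + l₂ + l₃)) (i : Fin (l₁ + l₂) →₀ ℕ) : Fin (l₁ + l₂) →₀ ℕ :=
  if h : (p : ℕ) < l₁ + l₂ then i - Finsupp.single ⟨(p : ℕ), h⟩ 1 else i

/-- The derivation `∂_p` of `A(l₁,l₂,l₃;Γ)`: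
`∂_p(x^α t^i) = α_p x^α t^i + i_p x^α t^{i - 1_[p]}`. -/
noncomputable def pd (p : Fin (l₁ + l₂ + l₃)) :
    Alg F l₁ l₂ l₃ Γ →ₗ[F] Alg F l₁ l₂ l₃ Γ :=
  (Finsupp.lsum F fun g : ↥Γ × (Fin (l₁ + l₂) →₀ ℕ) =>
    LinearMap.toSpanSingleton F (Alg F l₁ l₂ l₃ Γ)
      (acoord F l₁ l₂ l₃ Γ p g.1 • mono F l₁ l₂ l₃ Γ g.1 g.2
        + (icoord l₁ l₂ l₃ p g.2 : F) • mono F l₁ l₂ l₃ Γ g.1 (lower l₁ l₂ l₃ p g.2)))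
    ∘ₗ (AddMonoidAlgebra.coeffLinearEquiv F).toLinearMap

/-- The Witt algebra `W(l₁,l₂,l₃;Γ) = A·D`; the tuple `u : Wt` represents `Σ_p u_p ∂_p`. -/
abbrev Wt : Type := Fin (l₁ + l₂ + l₃) → Alg F l₁ l₂ l₃ Γ

/-- The Lie bracket of `W(l₁,l₂,l₃;Γ)`:
`[Σ_p u_p ∂_p, Σ_q v_q ∂_q] = Σ_{p,q} (u_p ∂_p(v_q) - v_p ∂_p(u_q)) ∂_q`. -/
noncomputable def wbr (u v : Wt F l₁ l₂ l₃ Γ) : Wt F l₁ l₂ l₃ Γ :=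
  fun r => ∑ p, (u p * pd F l₁ l₂ l₃ Γ p (v r) - v p * pd F l₁ l₂ l₃ Γ p (u r))

/-- `D_{p,q}(u) = ∂_p(u) ∂_q - ∂_q(u) ∂_p`. -/
noncomputable def Dpq (p q : Fin (l₁ + l₂ + l₃)) (u : Alg F l₁ l₂ l₃ Γ) :
    Wt F l₁ l₂ l₃ Γ :=
  Pi.single q (pd F l₁ l₂ l₃ Γ p u) - Pi.single p (pd F l₁ l₂ l₃ Γ q u)

/-- The divergence-free algebra `S(l₁,l₂,l₃;0,Γ) = Span{D_{p,q}(u)}`. -/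
noncomputable def Ssub : Submodule F (Wt F l₁ l₂ l₃ Γ) :=
  Submodule.span F {w | ∃ p q u, w = Dpq F l₁ l₂ l₃ Γ p q u}

/-- `Γ` is nondegenerate: it contains an `F`-basis of `F^{l₂+l₃}`, i.e. it spans. -/
def Nondeg : Prop := Submodule.span F (Γ : Set (Fin (l₂ + l₃) → F)) = ⊤

/-- The divergence `div(Σ_p u_p ∂_p) = Σ_p ∂_p(u_p)`. -/
noncomputable def dvg (w : Wt F l₁ l₂ l₃ Γ) : Alg F l₁ l₂ l₃ Γ :=
  ∑ p, pd F l₁ l₂ l₃ Γ p (w p)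

/-- The action of `Σ_p u_p ∂_p ∈ W` on `A_μ` (the space `A` with basis `v_{β,i}` the monomials):
`(u ∂_p) . v = u * (∂_p + μ_p) v`. On basis elements this gives exactly the defining formulas
of the module `A_μ`. -/
noncomputable def actW (μ : Fin (l₂ + l₃) → F) (X : Wt F l₁ l₂ l₃ Γ) :
    Alg F l₁ l₂ l₃ Γ →ₗ[F] Alg F l₁ l₂ l₃ Γ :=
  ∑ p, (LinearMap.mulLeft F (X p)).comp
    (pd F l₁ l₂ l₃ Γ p + fcoord F l₁ l₂ l₃ p μ • LinearMap.id)

/-- The element `Σ_p a_p ∂_p` of `D ⊆ W`. -/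
noncomputable def wD (a : Fin (l₁ + l₂ + l₃) → F) : Wt F l₁ l₂ l₃ Γ :=
  fun p => algebraMap F (Alg F l₁ l₂ l₃ Γ) (a p)

/-- The element `∂_p ∈ W`. -/
noncomputable def wdelta (p : Fin (l₁ + l₂ + l₃)) : Wt F l₁ l₂ l₃ Γ :=
  Pi.single p 1

/-- `β(∂) = Σ_{p>l₁} a_p β_p` for `∂ = Σ_p a_p ∂_p`. -/
def beval (β : Fin (l₂ + l₃) → F) (a : Fin (l₁ + l₂ + l₃) → F) : F :=
  ∑ p, a p * fcoord F l₁ l₂ l₃ p β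


set_option linter.unusedSectionVars false

-- basic lemmas
lemma pd_single (p : Fin (l₁ + l₂ + l₃)) (α : Γ) (i : Fin (l₁ + l₂) →₀ ℕ) (c : F) :
    pd F l₁ l₂ l₃ Γ p (AddMonoidAlgebra.single (α, i) c)
      = c • (acoord F l₁ l₂ l₃ Γ p α • mono F l₁ l₂ l₃ Γ α i
        + (icoord l₁ l₂ l₃ p i : F) • mono F l₁ l₂ l₃ Γ α (lower l₁ l₂ l₃ p i)) := by
  rw [pd, LinearMap.comp_apply]
  erw [Finsupp.lsum_single]
  rw [LinearMap.toSpanSingleton_apply]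

lemma lower_comm (p q : Fin (l₁ + l₂ + l₃)) (i : Fin (l₁ + l₂) →₀ ℕ) :
    lower l₁ l₂ l₃ p (lower l₁ l₂ l₃ q i) = lower l₁ l₂ l₃ q (lower l₁ l₂ l₃ p i) := by
  unfold lower
  split_ifs <;> try rfl
  rw [tsub_tsub, tsub_tsub]
  exact congrArg (_ - ·) (add_comm _ _)

lemma icoord_lower (p q : Fin (l₁ + l₂ + l₃)) (hpq : p ≠ q) (i : Fin (l₁ + l₂) →₀ ℕ) :
    icoord l₁ l₂ l₃ q (lower l₁ l₂ l₃ p i) = icoord l₁ l₂ l₃ q i := by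
  unfold lower icoord
  split_ifs with h1 h2 h2 <;> try rfl
  rw [Finsupp.tsub_apply, Finsupp.single_apply, if_neg, Nat.sub_zero]
  simp only [Fin.mk.injEq]
  exact fun h => hpq (Fin.ext h)


lemma acoord_add (p : Fin (l₁ + l₂ + l₃)) (α β : Γ) :
    acoord F l₁ l₂ l₃ Γ p (α + β) = acoord F l₁ l₂ l₃ Γ p α + acoord F l₁ l₂ l₃ Γ p β := by
  unfold acoord; split_ifs <;> simp

lemma icoord_add (p : Fin (l₁ + l₂ + l₃)) (i j : Fin (l₁ + l₂) →₀ ℕ) :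
    icoord l₁ l₂ l₃ p (i + j) = icoord l₁ l₂ l₃ p i + icoord l₁ l₂ l₃ p j := by
  unfold icoord; split_ifs <;> simp

lemma mono_mul (α β : Γ) (i j : Fin (l₁ + l₂) →₀ ℕ) :
    mono F l₁ l₂ l₃ Γ α i * mono F l₁ l₂ l₃ Γ β j = mono F l₁ l₂ l₃ Γ (α + β) (i + j) := by
  unfold mono
  rw [AddMonoidAlgebra.single_mul_single, one_mul]
  rfl

lemma smul_mono_lower_add (p : Fin (l₁ + l₂ + l₃)) (γ : Γ) (i j : Fin (l₁ + l₂) →₀ ℕ) :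
    (icoord l₁ l₂ l₃ p i : F) • mono F l₁ l₂ l₃ Γ γ (lower l₁ l₂ l₃ p (i + j))
      = (icoord l₁ l₂ l₃ p i : F) • mono F l₁ l₂ l₃ Γ γ (lower l₁ l₂ l₃ p i + j) := by
  unfold icoord lower
  split_ifs with h
  · by_cases hi : i ⟨(p : ℕ), h⟩ = 0
    · rw [hi]; simp
    · have hle : Finsupp.single ⟨(p : ℕ), h⟩ 1 ≤ i := by
        rw [Finsupp.single_le_iff]; omega
      rw [tsub_add_eq_add_tsub hle]
  · rfl

lemma pd_mono (p : Fin (l₁ + l₂ + l₃)) (α : Γ) (i : Fin (l₁ + l₂) →₀ ℕ) :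
    pd F l₁ l₂ l₃ Γ p (mono F l₁ l₂ l₃ Γ α i)
      = acoord F l₁ l₂ l₃ Γ p α • mono F l₁ l₂ l₃ Γ α i
        + (icoord l₁ l₂ l₃ p i : F) • mono F l₁ l₂ l₃ Γ α (lower l₁ l₂ l₃ p i) := by
  conv_lhs => rw [mono, pd_single, one_smul]

lemma of_eq_mono (α : Γ) (i : Fin (l₁ + l₂) →₀ ℕ) :
    (AddMonoidAlgebra.of F (↥Γ × (Fin (l₁ + l₂) →₀ ℕ)) (Multiplicative.ofAdd (α, i)))
      = mono F l₁ l₂ l₃ Γ α i := rfl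

lemma pd_mul (p : Fin (l₁ + l₂ + l₃)) (u v : Alg F l₁ l₂ l₃ Γ) :
    pd F l₁ l₂ l₃ Γ p (u * v)
      = pd F l₁ l₂ l₃ Γ p u * v + u * pd F l₁ l₂ l₃ Γ p v := by
  induction u using AddMonoidAlgebra.induction_on with
  | add f g hf hg => rw [add_mul, map_add, map_add, hf, hg, add_mul]; ring
  | smul r f hf =>
    rw [smul_mul_assoc, map_smul, map_smul, hf, smul_add, smul_mul_assoc, smul_mul_assoc]
  | of a =>
    obtain ⟨α, i⟩ := a
    rw [of_eq_mono]
    induction v using AddMonoidAlgebra.induction_on with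
    | add f g hf hg => rw [mul_add, map_add, map_add, hf, hg, mul_add]; ring
    | smul r f hf =>
      rw [mul_smul_comm, map_smul, map_smul, hf, smul_add, mul_smul_comm r, mul_smul_comm r]
    | of b =>
      obtain ⟨β, j⟩ := b
      rw [of_eq_mono, mono_mul, pd_mono, pd_mono, pd_mono,
        acoord_add, icoord_add]
      push_cast
      rw [add_smul, add_smul, smul_mono_lower_add]
      have h2 : (icoord l₁ l₂ l₃ p j : F) • mono F l₁ l₂ l₃ Γ (α + β) (lower l₁ l₂ l₃ p (i + j))
          = (icoord l₁ l₂ l₃ p j : F) • mono F l₁ l₂ l₃ Γ (α + β) (i + lower l₁ l₂ l₃ p j) := by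
        rw [add_comm i j, smul_mono_lower_add,
          add_comm (lower l₁ l₂ l₃ p j) i]
      rw [h2]
      simp only [add_mul, mul_add, smul_mul_assoc, mul_smul_comm, mono_mul]
      module

lemma icoord_mul_comm (p q : Fin (l₁ + l₂ + l₃)) (hpq : p ≠ q) (i : Fin (l₁ + l₂) →₀ ℕ) :
    icoord l₁ l₂ l₃ q i * icoord l₁ l₂ l₃ p (lower l₁ l₂ l₃ q i)
      = icoord l₁ l₂ l₃ p i * icoord l₁ l₂ l₃ q (lower l₁ l₂ l₃ p i) := by
  rw [icoord_lower _ _ _ q p (fun h => hpq h.symm), icoord_lower _ _ _ p q hpq, mul_comm]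

lemma pd_comm (p q : Fin (l₁ + l₂ + l₃)) (u : Alg F l₁ l₂ l₃ Γ) :
    pd F l₁ l₂ l₃ Γ p (pd F l₁ l₂ l₃ Γ q u) = pd F l₁ l₂ l₃ Γ q (pd F l₁ l₂ l₃ Γ p u) := by
  by_cases hpq : p = q
  · rw [hpq]
  induction u using AddMonoidAlgebra.induction_on with
  | add f g hf hg => rw [map_add, map_add, map_add, map_add, hf, hg]
  | smul r f hf => rw [map_smul, map_smul, map_smul, map_smul, hf]
  | of a =>
    obtain ⟨α, i⟩ := a
    rw [of_eq_mono, pd_mono, pd_mono, map_add, map_add, map_smul, map_smul,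
      map_smul, map_smul, pd_mono, pd_mono, pd_mono, pd_mono]
    rw [lower_comm]
    rw [icoord_lower _ _ _ q p (fun h => hpq h.symm), icoord_lower _ _ _ p q hpq]
    module

lemma wbr_add_left (X X' Y : Wt F l₁ l₂ l₃ Γ) :
    wbr F l₁ l₂ l₃ Γ (X + X') Y = wbr F l₁ l₂ l₃ Γ X Y + wbr F l₁ l₂ l₃ Γ X' Y := by
  funext t
  simp only [wbr, Pi.add_apply, map_add, add_mul, mul_add]
  rw [← Finset.sum_add_distrib]
  exact Finset.sum_congr rfl fun k _ => by ring

lemma wbr_smul_left (c : F) (X Y : Wt F l₁ l₂ l₃ Γ) :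
    wbr F l₁ l₂ l₃ Γ (c • X) Y = c • wbr F l₁ l₂ l₃ Γ X Y := by
  funext t
  simp only [wbr, Pi.smul_apply, map_smul, smul_mul_assoc, mul_smul_comm]
  rw [Finset.smul_sum]
  exact Finset.sum_congr rfl fun k _ => by rw [smul_sub]

lemma wbr_zero_left (Y : Wt F l₁ l₂ l₃ Γ) : wbr F l₁ l₂ l₃ Γ 0 Y = 0 := by
  funext t
  simp [wbr]

lemma wbr_add_right (X Y Y' : Wt F l₁ l₂ l₃ Γ) :
    wbr F l₁ l₂ l₃ Γ X (Y + Y') = wbr F l₁ l₂ l₃ Γ X Y + wbr F l₁ l₂ l₃ Γ X Y' := by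
  funext t
  simp only [wbr, Pi.add_apply, map_add, add_mul, mul_add]
  rw [← Finset.sum_add_distrib]
  exact Finset.sum_congr rfl fun k _ => by ring

lemma wbr_smul_right (c : F) (X Y : Wt F l₁ l₂ l₃ Γ) :
    wbr F l₁ l₂ l₃ Γ X (c • Y) = c • wbr F l₁ l₂ l₃ Γ X Y := by
  funext t
  simp only [wbr, Pi.smul_apply, map_smul, smul_mul_assoc, mul_smul_comm]
  rw [Finset.smul_sum]
  exact Finset.sum_congr rfl fun k _ => by rw [smul_sub]

lemma wbr_zero_right (X : Wt F l₁ l₂ l₃ Γ) : wbr F l₁ l₂ l₃ Γ X 0 = 0 := by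
  funext t
  simp [wbr]

lemma wbr_Dpq (p q r s : Fin (l₁ + l₂ + l₃)) (u v : Alg F l₁ l₂ l₃ Γ) :
    wbr F l₁ l₂ l₃ Γ (Dpq F l₁ l₂ l₃ Γ p q u) (Dpq F l₁ l₂ l₃ Γ r s v)
      = Dpq F l₁ l₂ l₃ Γ q s (pd F l₁ l₂ l₃ Γ p u * pd F l₁ l₂ l₃ Γ r v)
        - Dpq F l₁ l₂ l₃ Γ q r (pd F l₁ l₂ l₃ Γ p u * pd F l₁ l₂ l₃ Γ s v)
        - Dpq F l₁ l₂ l₃ Γ p s (pd F l₁ l₂ l₃ Γ q u * pd F l₁ l₂ l₃ Γ r v)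
        + Dpq F l₁ l₂ l₃ Γ p r (pd F l₁ l₂ l₃ Γ q u * pd F l₁ l₂ l₃ Γ s v) := by
  funext t
  simp only [wbr, Dpq, Pi.sub_apply, Pi.single_apply, Pi.add_apply,
    map_sub, sub_mul, ite_mul, zero_mul, mul_sub,
    apply_ite (pd F l₁ l₂ l₃ Γ _), map_zero,
    Finset.sum_sub_distrib, Finset.sum_ite_eq', Finset.mem_univ, if_true]
  simp only [pd_mul]
  rw [pd_comm F l₁ l₂ l₃ Γ q p u, pd_comm F l₁ l₂ l₃ Γ s r v]
  split_ifs <;> ring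


/-- `S(l₁,l₂,l₃;0,Γ)`, the span of all `D_{p,q}(u) = ∂_p(u)∂_q − ∂_q(u)∂_p`, is closed under
the Lie bracket of `W(l₁,l₂,l₃;Γ)`, i.e. it is a Lie subalgebra. -/
theorem stmt3 [IsAlgClosed F] [CharZero F] :
    ∀ X ∈ Ssub F l₁ l₂ l₃ Γ, ∀ Y ∈ Ssub F l₁ l₂ l₃ Γ,
      wbr F l₁ l₂ l₃ Γ X Y ∈ Ssub F l₁ l₂ l₃ Γ := by
  intro X hX
  induction hX using Submodule.span_induction with
  | mem x hx =>
    intro Y hY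
    induction hY using Submodule.span_induction with
    | mem y hy =>
      obtain ⟨p, q, u, rfl⟩ := hx
      obtain ⟨r, s, v, rfl⟩ := hy
      rw [wbr_Dpq]
      have h1 : Dpq F l₁ l₂ l₃ Γ q s (pd F l₁ l₂ l₃ Γ p u * pd F l₁ l₂ l₃ Γ r v)
          ∈ Ssub F l₁ l₂ l₃ Γ := Submodule.subset_span ⟨q, s, _, rfl⟩
      have h2 : Dpq F l₁ l₂ l₃ Γ q r (pd F l₁ l₂ l₃ Γ p u * pd F l₁ l₂ l₃ Γ s v)
          ∈ Ssub F l₁ l₂ l₃ Γ := Submodule.subset_span ⟨q, r, _, rfl⟩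
      have h3 : Dpq F l₁ l₂ l₃ Γ p s (pd F l₁ l₂ l₃ Γ q u * pd F l₁ l₂ l₃ Γ r v)
          ∈ Ssub F l₁ l₂ l₃ Γ := Submodule.subset_span ⟨p, s, _, rfl⟩
      have h4 : Dpq F l₁ l₂ l₃ Γ p r (pd F l₁ l₂ l₃ Γ q u * pd F l₁ l₂ l₃ Γ s v)
          ∈ Ssub F l₁ l₂ l₃ Γ := Submodule.subset_span ⟨p, r, _, rfl⟩
      exact add_mem (sub_mem (sub_mem h1 h2) h3) h4
    | zero => rw [wbr_zero_right]; exact zero_mem _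
    | add y y' hy hy' ihy ihy' => rw [wbr_add_right]; exact add_mem ihy ihy'
    | smul c y hy ihy => rw [wbr_smul_right]; exact Submodule.smul_mem _ _ ihy
  | zero => intro Y hY; rw [wbr_zero_left]; exact zero_mem _
  | add x x' hx hx' ihx ihx' =>
    intro Y hY
    rw [wbr_add_left]
    exact add_mem (ihx Y hY) (ihx' Y hY)
  | smul c x hx ihx =>
    intro Y hY
    rw [wbr_smul_left]
    exact Submodule.smul_mem _ _ (ihx Y hY)


end SDF
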